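/- arXiv:1908.04468 — 4 statements merged into one kernel-verified Lean document; each statement's English description precedes it below -/
import Mathlib

section
/- Under the same descent setup (d_t distance estimates, g_t gradient estimates, step size η = 1/8000), if some iteration t satisfies ‖μ − x_t‖ ≤ 14000r, then the output x_{t*} with t* = argmin_t d_t satisfies ‖μ − x_{t*}‖ ≤ 588000 r. -/
open RealInnerProductSpace

/-- If each `d t` is a distance estimate with respect to `x t`, some iteration
satisfies `‖μ - x t‖ ≤ 14000 r`, and `t*` minimizes `d`, then the output
`x t*` satisfies `‖μ - x t*‖ ≤ 588000 r`. -/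
theorem descent_output_guarantee
    {D T : ℕ} (μ : EuclideanSpace ℝ (Fin D))
    (x : Fin T → EuclideanSpace ℝ (Fin D)) (d : Fin T → ℝ) (r : ℝ)
    (hr : 0 < r)
    (hdist₁ : ∀ t, ‖μ - x t‖ ≤ 14000 * r → d t ≤ 28000 * r)
    (hdist₂ : ∀ t, ‖μ - x t‖ > 14000 * r →
      (1 / 21) * ‖μ - x t‖ ≤ d t ∧ d t ≤ 2 * ‖μ - x t‖)
    (hgood : ∃ t, ‖μ - x t‖ ≤ 14000 * r)
    (tstar : Fin T) (hmin : ∀ t, d tstar ≤ d t) :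
    ‖μ - x tstar‖ ≤ 588000 * r := by
  obtain ⟨t, ht⟩ := hgood
  have h1 : d tstar ≤ 28000 * r := (hmin t).trans (hdist₁ t ht)
  by_cases h : ‖μ - x tstar‖ ≤ 14000 * r
  · nlinarith
  · have h2 := (hdist₂ tstar (lt_of_not_ge h)).1
    nlinarith
end

section
/- Let Z_1,…,Z_k, x, μ ∈ R^d and r > 0, and suppose the Lugosi–Mendelson condition holds: for every unit vector v, |{i : ⟨v, Z_i − μ⟩ ≥ 600r}| ≤ 0.05k. Let θ' be the optimal value of the two-sided program max θ subject to: there exist b ∈ {0,1}^k with ∑b_i ≥ 0.95k and a unit vector w with b_i|⟨Z_i − x, w⟩| ≥ b_i θ for all i. Then θ' ≤ ‖μ − x‖ + 600r. -/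
open RealInnerProductSpace

/-- Under the Lugosi–Mendelson condition, every feasible value `θ` of the
two-sided inner maximization `M₂(x, Z)` satisfies `θ ≤ ‖μ - x‖ + 600 r`;
in particular the optimal value does. -/
theorem twosided_opt_upper_bound
    {d k : ℕ} (hk : 0 < k)
    (Z : Fin k → EuclideanSpace ℝ (Fin d))
    (x μ : EuclideanSpace ℝ (Fin d)) (r : ℝ) (hr : 0 < r)
    (hLM : ∀ v : EuclideanSpace ℝ (Fin d), ‖v‖ = 1 →
      ((Finset.univ.filter fun i => ⟪v, Z i - μ⟫ ≥ 600 * r).card : ℝ)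
        ≤ 0.05 * k)
    (θ : ℝ) (b : Fin k → Bool) (w : EuclideanSpace ℝ (Fin d))
    (hw : ‖w‖ = 1)
    (hb : ((Finset.univ.filter fun i => b i = true).card : ℝ) ≥ 0.95 * k)
    (hmargin : ∀ i, b i = true → |⟪Z i - x, w⟫| ≥ θ) :
    θ ≤ ‖μ - x‖ + 600 * r := by
  set B1 := Finset.univ.filter fun i => ⟪w, Z i - μ⟫ ≥ 600 * r with hB1
  set B2 := Finset.univ.filter fun i => ⟪-w, Z i - μ⟫ ≥ 600 * r with hB2
  have hB1c : (B1.card : ℝ) ≤ 0.05 * k := hLM w hw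
  have hB2c : (B2.card : ℝ) ≤ 0.05 * k := hLM (-w) (by rw [norm_neg, hw])
  set G := Finset.univ.filter fun i => b i = true with hG
  have hnot : ¬ (G ⊆ B1 ∪ B2) := by
    intro hsub
    have h1 : (G.card : ℝ) ≤ ((B1 ∪ B2).card : ℝ) := by
      exact_mod_cast Finset.card_le_card hsub
    have h2 : ((B1 ∪ B2).card : ℝ) ≤ (B1.card : ℝ) + B2.card := by
      exact_mod_cast Finset.card_union_le B1 B2
    have hk' : (0:ℝ) < k := by exact_mod_cast hk
    nlinarith [hb]
  obtain ⟨i, hiG, hiB⟩ := Finset.not_subset.mp hnot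
  simp only [Finset.mem_union, not_or] at hiB
  have hbi : b i = true := by simpa [hG] using hiG
  have h1 : ¬ (⟪w, Z i - μ⟫ ≥ 600 * r) := by
    intro h; exact hiB.1 (Finset.mem_filter.mpr ⟨Finset.mem_univ i, h⟩)
  have h2 : ¬ (⟪-w, Z i - μ⟫ ≥ 600 * r) := by
    intro h; exact hiB.2 (Finset.mem_filter.mpr ⟨Finset.mem_univ i, h⟩)
  rw [inner_neg_left] at h2
  push_neg at h1 h2
  have habs : |⟪w, Z i - μ⟫| ≤ 600 * r := by
    rw [abs_le]; constructor <;> linarith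
  have hCS : |⟪w, μ - x⟫| ≤ ‖μ - x‖ := by
    calc |⟪w, μ - x⟫| ≤ ‖w‖ * ‖μ - x‖ := abs_real_inner_le_norm _ _
    _ = ‖μ - x‖ := by rw [hw, one_mul]
  have hsplit : ⟪Z i - x, w⟫ = ⟪w, Z i - μ⟫ + ⟪w, μ - x⟫ := by
    rw [real_inner_comm, ← inner_add_right]
    congr 1
    abel
  calc θ ≤ |⟪Z i - x, w⟫| := hmargin i hbi
    _ ≤ |⟪w, Z i - μ⟫| + |⟪w, μ - x⟫| := by rw [hsplit]; exact abs_add_le _ _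
    _ ≤ ‖μ - x‖ + 600 * r := by linarith
end

section
/- Let μ, x, g ∈ R^d with ‖g‖ = 1 and ‖μ − x‖ ≥ 14000r, and let d ≥ (1/20)(‖μ − x‖ − 600r). Suppose there exists an index j such that ⟨Z_j − x, g⟩ ≥ d and ⟨Z_j − μ, g⟩ ≤ 600r. Then ⟨g, (μ − x)/‖μ − x‖⟩ ≥ 1/200. -/
open RealInnerProductSpace

/-- Core inequality of the gradient-estimate lemma: a point `Z` with large
margin in direction `g` relative to `x` that is close to `μ` in direction `g`
forces `g` to correlate with the true gradient direction. -/
theorem gradient_estimate_core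
    {D : ℕ} (μ x g Z : EuclideanSpace ℝ (Fin D)) (d r : ℝ)
    (hr : 0 < r)
    (hg : ‖g‖ = 1)
    (hfar : ‖μ - x‖ ≥ 14000 * r)
    (hd : d ≥ (1 / 20) * (‖μ - x‖ - 600 * r))
    (hZ₁ : ⟪Z - x, g⟫ ≥ d)
    (hZ₂ : ⟪Z - μ, g⟫ ≤ 600 * r) :
    ⟪g, (‖μ - x‖)⁻¹ • (μ - x)⟫ ≥ 1 / 200 := by
  set M := ‖μ - x‖ with hM
  have hMpos : 0 < M := lt_of_lt_of_le (by positivity) hfar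
  have hsplit : ⟪g, μ - x⟫ = ⟪Z - x, g⟫ - ⟪Z - μ, g⟫ := by
    rw [real_inner_comm]
    rw [← inner_sub_left]
    congr 1
    abel
  have h1 : ⟪g, μ - x⟫ ≥ d - 600 * r := by
    rw [hsplit]; linarith
  have h2 : ⟪g, μ - x⟫ ≥ M / 200 := by linarith
  rw [real_inner_smul_right]
  rw [ge_iff_le, le_inv_mul_iff₀ hMpos]
  linarith
end

section
/- (MWU regret consequence for the FHP algorithm) Suppose unit vectors w_1,…,w_T and smooth distributions τ_1,…,τ_T on [k] satisfy ∑_{t=1}^T ⟨τ_t, σ_t²⟩ ≤ (3/2)∑_{t=1}^T ⟨p, σ_t²⟩ + 2·KL(p‖τ_1) for every smooth p, where σ_t(i) = |⟨Z_i, w_t⟩| ∈ [0,1] and τ_1 is uniform. If additionally ∑_{t=1}^T ⟨τ_t, σ_t²⟩ ≥ (2T/25)θ² and T ≥ 10^5 · (log k)/θ², then for all but a 1/4 fraction of indices i ∈ [k]: ∑_{t=1}^T ⟨Z_i, w_t⟩² ≥ 100 log k. -/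
open RealInnerProductSpace

/-- MWU regret consequence for the FHP algorithm: given the regret bound with
Bregman projections onto smooth distributions, the lower bound on the total
weighted energy, and `T ≥ 10⁵ log k / θ²`, all but a `1/4` fraction of the
indices `i` satisfy `∑_t ⟨Z_i, w_t⟩² ≥ 100 log k`. -/
theorem mwu_regret_consequence
    {d k T : ℕ} (hk : 0 < k)
    (Z : Fin k → EuclideanSpace ℝ (Fin d))
    (w : Fin T → EuclideanSpace ℝ (Fin d)) (hw : ∀ t, ‖w t‖ = 1)
    (τ : Fin T → Fin k → ℝ)
    (hτ0 : ∀ t i, 0 ≤ τ t i) (hτ1 : ∀ t, ∑ i, τ t i = 1)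
    (hτsmooth : ∀ t i, τ t i ≤ 4 / k)
    (hσ : ∀ t i, |⟪Z i, w t⟫| ≤ 1)
    (θ : ℝ) (hθ : 0 < θ)
    (hregret : ∀ p : Fin k → ℝ, (∀ i, 0 ≤ p i) → (∑ i, p i = 1) →
      (∀ i, p i ≤ 4 / k) →
      ∑ t, ∑ i, τ t i * ⟪Z i, w t⟫ ^ 2
        ≤ (3 / 2) * ∑ t, ∑ i, p i * ⟪Z i, w t⟫ ^ 2
          + 2 * ∑ i, p i * Real.log (p i * k))
    (henergy : ∑ t, ∑ i, τ t i * ⟪Z i, w t⟫ ^ 2 ≥ (2 * T / 25) * θ ^ 2)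
    (hT : (T : ℝ) ≥ 10 ^ 5 * Real.log k / θ ^ 2) :
    ((Finset.univ.filter fun i =>
        ¬ (∑ t, ⟪Z i, w t⟫ ^ 2 ≥ 100 * Real.log k)).card : ℝ)
      ≤ k / 4 := by
  by_contra hcon
  rw [not_le] at hcon
  set B := (Finset.univ.filter fun i =>
      ¬ (∑ t, ⟪Z i, w t⟫ ^ 2 ≥ 100 * Real.log k)) with hB
  have hkR : (0:ℝ) < k := by exact_mod_cast hk
  have hmk : (k : ℝ) < 4 * B.card := by linarith
  have hm0 : (0:ℝ) < B.card := by linarith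
  have hm0' : 0 < B.card := by exact_mod_cast hm0
  -- there is a bad index, hence log k > 0
  obtain ⟨i0, hi0⟩ := Finset.card_pos.mp hm0'
  have hbad : ∑ t, ⟪Z i0, w t⟫ ^ 2 < 100 * Real.log k :=
    not_le.mp ((Finset.mem_filter.mp hi0).2)
  have hα0 : (0:ℝ) ≤ ∑ t, ⟪Z i0, w t⟫ ^ 2 :=
    Finset.sum_nonneg fun t _ => sq_nonneg _
  have hlogk_pos : 0 < Real.log k := by linarith
  have hk1 : (1:ℝ) < k := by
    by_contra h
    push_neg at h
    have : Real.log k ≤ 0 := Real.log_nonpos hkR.le h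
    linarith
  have hlog2 : (0:ℝ) < Real.log 2 := Real.log_pos one_lt_two
  have hk2 : (2:ℝ) ≤ k := by
    have : 2 ≤ k := by exact_mod_cast hk1
    exact_mod_cast this
  have hlog2k : Real.log 2 ≤ Real.log k :=
    Real.log_le_log (by norm_num) hk2
  set m : ℝ := (B.card : ℝ) with hmdef
  set p : Fin k → ℝ := fun i => if i ∈ B then 1 / m else 0 with hp
  have hp0 : ∀ i, 0 ≤ p i := by
    intro i; simp only [hp]; split <;> positivity
  have hp1 : ∑ i, p i = 1 := by
    simp only [hp]
    rw [Finset.sum_ite_mem, Finset.univ_inter, Finset.sum_const, nsmul_eq_mul]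
    field_simp
    exact hmdef.symm
  have hpsm : ∀ i, p i ≤ 4 / k := by
    intro i; simp only [hp]; split
    · rw [div_le_div_iff₀ hm0 hkR]; linarith
    · positivity
  have hreg := hregret p hp0 hp1 hpsm
  have hswap : ∑ t, ∑ i, p i * ⟪Z i, w t⟫ ^ 2
      = ∑ i, p i * ∑ t, ⟪Z i, w t⟫ ^ 2 := by
    rw [Finset.sum_comm]
    exact Finset.sum_congr rfl fun i _ => (Finset.mul_sum _ _ _).symm
  rw [hswap] at hreg
  have hA : ∑ i, p i * ∑ t, ⟪Z i, w t⟫ ^ 2 ≤ 100 * Real.log k := by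
    have h1 : ∑ i, p i * ∑ t, ⟪Z i, w t⟫ ^ 2
        ≤ ∑ i, p i * (100 * Real.log k) := by
      apply Finset.sum_le_sum
      intro i _
      by_cases hi : i ∈ B
      · have := not_le.mp ((Finset.mem_filter.mp hi).2)
        exact mul_le_mul_of_nonneg_left this.le (hp0 i)
      · simp [hp, hi]
    calc ∑ i, p i * ∑ t, ⟪Z i, w t⟫ ^ 2
        ≤ ∑ i, p i * (100 * Real.log k) := h1
      _ = (∑ i, p i) * (100 * Real.log k) := (Finset.sum_mul _ _ _).symm
      _ = 100 * Real.log k := by rw [hp1, one_mul]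
  have hE : ∑ i, p i * Real.log (p i * k) ≤ 2 * Real.log 2 := by
    have h1 : ∀ i, p i * Real.log (p i * k)
        = if i ∈ B then (1 / m) * Real.log ((1 / m) * k) else 0 := by
      intro i; by_cases hi : i ∈ B <;> simp [hp, hi]
    have h2 : ∑ i, p i * Real.log (p i * k) = Real.log ((1 / m) * k) := by
      rw [Finset.sum_congr rfl fun i _ => h1 i, Finset.sum_ite_mem,
        Finset.univ_inter, Finset.sum_const, nsmul_eq_mul, ← hmdef,
        ← mul_assoc]
      rw [mul_one_div, div_self (ne_of_gt hm0), one_mul]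
    rw [h2]
    have h3 : (1 / m) * k ≤ 4 := by
      rw [one_div_mul_eq_div, div_le_iff₀ hm0]; linarith
    have h4 : Real.log ((1 / m) * k) ≤ Real.log 4 :=
      Real.log_le_log (by positivity) h3
    have h5 : Real.log 4 = 2 * Real.log 2 := by
      rw [show (4:ℝ) = 2 ^ 2 by norm_num, Real.log_pow]; push_cast; ring
    linarith
  have hθ2 : (0:ℝ) < θ ^ 2 := by positivity
  have hlt : 10 ^ 5 * Real.log k ≤ (T:ℝ) * θ ^ 2 := (div_le_iff₀ hθ2).mp hT
  have heq : (2 * (T:ℝ) / 25) * θ ^ 2 = (2 / 25) * ((T:ℝ) * θ ^ 2) := by ring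
  rw [heq] at henergy
  linarith
end
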